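/- arXiv:math/0505208 — 4 statements merged into one kernel-verified Lean document; each statement's English description precedes it below -/
import Mathlib

section
/- Let (Ω, 𝓕, P) be a probability space, T > 0, D ⊆ ℝ^d nonempty, m ∈ ℕ, and for each (t,x,k) ∈ [0,T] × D × {1,…,m} let X^{t,x,k} : [t,T] × Ω → D be a jointly measurable process. Let h : D → ℝ^m and g : [0,T] × D × ℝ^m → ℝ^m be bounded measurable, let c : [0,T] × D → ℝ^m be measurable with c^k(t,x) ≤ K for a constant K ≥ 0 and all k, t, x, and suppose g is Lipschitz-continuous in v uniformly in (t,x): there exists L < ∞ with |g(t,x,v1) − g(t,x,v2)| ≤ L |v1 − v2| for all (t,x) ∈ [0,T] × D and all v1, v2 ∈ ℝ^m. Then for every β > 0 and all bounded measurable v, w : [0,T] × D → ℝ^m, the operator F satisfies ‖Fv − Fw‖_β ≤ (L e^{KT} / β) ‖v − w‖_β. In particular, F is a contraction with respect to ‖·‖_β whenever β > L e^{KT}. -/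
open MeasureTheory Set

/-- The weighted sup-norm `‖v‖_β = sup_{(t,x) ∈ [0,T] × D} e^{-β(T-t)} |v(t,x)|`,
where `|·|` on `ℝ^m` is the max-norm. -/
noncomputable def betaNorm {d m : ℕ} (T β : ℝ) (D : Set (Fin d → ℝ))
    (v : ℝ → (Fin d → ℝ) → Fin m → ℝ) : ℝ :=
  sSup ((fun q : ℝ × (Fin d → ℝ) => Real.exp (-β * (T - q.1)) * ‖v q.1 q.2‖) ''
    (Set.Icc 0 T ×ˢ D))



private lemma fk_meas_param {α : Type*} [MeasurableSpace α] (G : α → ℝ → ℝ)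
    (hGm : Measurable fun p : α × ℝ => G p.1 p.2) :
    Measurable fun a => ∫ u, G a u :=
  (hGm.stronglyMeasurable.integral_prod_right').measurable

private lemma fk_meas_int {Ω : Type*} [MeasurableSpace Ω] (t T : ℝ) (G : ℝ → Ω → ℝ)
    (hGm : Measurable (fun p : ℝ × Ω => G p.1 p.2)) :
    Measurable (fun ω => ∫ s in Set.Icc t T, G s ω) :=
  ((hGm.comp measurable_swap).stronglyMeasurable.integral_prod_right').measurable

set_option maxHeartbeats 1000000 in
/-- Auxiliary componentwise estimate for the Feynman–Kac operator. -/
theorem fk_component_bound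
    {Ω : Type*} [MeasurableSpace Ω] (P : Measure Ω) [IsProbabilityMeasure P]
    {d m : ℕ} (T t : ℝ) (ht0 : 0 ≤ t) (htT : t ≤ T)
    (D : Set (Fin d → ℝ))
    (Y : ℝ → Ω → Fin d → ℝ)
    (hYm : Measurable fun p : ℝ × Ω => Y p.1 p.2)
    (hYD : ∀ s ∈ Icc t T, ∀ ω, Y s ω ∈ D)
    (h : (Fin d → ℝ) → Fin m → ℝ)
    (g : ℝ → (Fin d → ℝ) → (Fin m → ℝ) → Fin m → ℝ)
    (c : ℝ → (Fin d → ℝ) → Fin m → ℝ)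
    (k : Fin m)
    (hhmeas : Measurable h) (Ch : ℝ) (hCh0 : 0 ≤ Ch) (hCh : ∀ x ∈ D, ‖h x‖ ≤ Ch)
    (hgmeas : Measurable fun q : ℝ × (Fin d → ℝ) × (Fin m → ℝ) => g q.1 q.2.1 q.2.2)
    (Cg : ℝ) (hCg0 : 0 ≤ Cg)
    (hCg : ∀ s ∈ Icc (0 : ℝ) T, ∀ x ∈ D, ∀ z : Fin m → ℝ, ‖g s x z‖ ≤ Cg)
    (hcmeas : Measurable fun q : ℝ × (Fin d → ℝ) => c q.1 q.2)
    (K : ℝ) (hK : 0 ≤ K)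
    (hcK : ∀ s ∈ Icc (0 : ℝ) T, ∀ x ∈ D, ∀ j : Fin m, c s x j ≤ K)
    (L : ℝ) (hL : 0 ≤ L)
    (hgLip : ∀ s ∈ Icc (0 : ℝ) T, ∀ x ∈ D, ∀ v₁ v₂ : Fin m → ℝ,
      ‖g s x v₁ - g s x v₂‖ ≤ L * ‖v₁ - v₂‖)
    (β : ℝ) (hβ : 0 < β)
    (v w : ℝ → (Fin d → ℝ) → Fin m → ℝ)
    (hvm : Measurable (fun q : ℝ × (Fin d → ℝ) => v q.1 q.2))
    (hwm : Measurable (fun q : ℝ × (Fin d → ℝ) => w q.1 q.2))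
    (M : ℝ) (hM0 : 0 ≤ M)
    (hMpt : ∀ s ∈ Icc (0 : ℝ) T, ∀ y ∈ D, ‖v s y - w s y‖ ≤ Real.exp (β * (T - s)) * M) :
    |(∫ ω, (h (Y T ω) k * Real.exp (∫ s in Icc t T, c s (Y s ω) k)
          + ∫ s in Icc t T, g s (Y s ω) (v s (Y s ω)) k
              * Real.exp (∫ u in Icc t s, c u (Y u ω) k)) ∂P)
      - (∫ ω, (h (Y T ω) k * Real.exp (∫ s in Icc t T, c s (Y s ω) k)
          + ∫ s in Icc t T, g s (Y s ω) (w s (Y s ω)) k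
              * Real.exp (∫ u in Icc t s, c u (Y u ω) k)) ∂P)|
      ≤ L * M * Real.exp (K * T) / β * Real.exp (β * (T - t)) := by
  -- joint measurability of the exponent
  have hEm : Measurable fun p : ℝ × Ω => ∫ u in Icc t p.1, c u (Y u p.2) k := by
    have hfm : Measurable (fun q : (ℝ × Ω) × ℝ =>
        if t ≤ q.2 ∧ q.2 ≤ q.1.1 then c q.2 (Y q.2 q.1.2) k else 0) := by
      refine Measurable.ite ?_ ?_ measurable_const
      · exact MeasurableSet.inter (measurableSet_le measurable_const measurable_snd)
          (measurableSet_le measurable_snd (measurable_fst.comp measurable_fst))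
      · have hh : Measurable fun q : (ℝ × Ω) × ℝ => c q.2 (Y q.2 q.1.2) k :=
          (measurable_pi_apply k).comp (hcmeas.comp (measurable_snd.prodMk
            (hYm.comp (measurable_snd.prodMk (measurable_snd.comp measurable_fst)))))
        exact hh
    have heq : (fun p : ℝ × Ω => ∫ u in Icc t p.1, c u (Y u p.2) k) =
        fun p : ℝ × Ω => ∫ u, (if t ≤ u ∧ u ≤ p.1 then c u (Y u p.2) k else 0) := by
      funext p
      rw [← integral_indicator measurableSet_Icc]
      congr 1
      funext u
      simp [Set.indicator_apply, Set.mem_Icc]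
    rw [heq]
    exact fk_meas_param (fun (p : ℝ × Ω) u => if t ≤ u ∧ u ≤ p.1 then c u (Y u p.2) k else 0) hfm
  -- bound on the exponent
  have hEle : ∀ s ∈ Icc t T, ∀ ω, (∫ u in Icc t s, c u (Y u ω) k) ≤ K * (s - t) := by
    intro s hs ω
    by_cases hint : IntegrableOn (fun u => c u (Y u ω) k) (Icc t s)
    · calc (∫ u in Icc t s, c u (Y u ω) k)
          ≤ ∫ _u in Icc t s, K := by
            refine setIntegral_mono_on hint (integrableOn_const (C := K) ?_)
              measurableSet_Icc ?_
            · rw [Real.volume_Icc]; exact ENNReal.ofReal_ne_top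
            · intro u hu
              exact hcK u ⟨le_trans ht0 hu.1, le_trans hu.2 hs.2⟩ _
                (hYD u ⟨hu.1, le_trans hu.2 hs.2⟩ ω) k
        _ = K * (s - t) := by
            rw [setIntegral_const, measureReal_def, Real.volume_Icc,
              ENNReal.toReal_ofReal (by linarith [hs.1] : (0:ℝ) ≤ s - t), smul_eq_mul,
              mul_comm]
    · rw [integral_undef hint]
      have h1 : (0:ℝ) ≤ s - t := by linarith [hs.1]
      exact mul_nonneg hK h1
  have hEexp : ∀ s ∈ Icc t T, ∀ ω,
      Real.exp (∫ u in Icc t s, c u (Y u ω) k) ≤ Real.exp (K * T) := by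
    intro s hs ω
    apply Real.exp_le_exp.2
    refine le_trans (hEle s hs ω) ?_
    have h1 : s - t ≤ T := by
      have := hs.2
      linarith
    nlinarith
  -- common facts for any bounded measurable `u`
  have pack : ∀ u : ℝ → (Fin d → ℝ) → Fin m → ℝ,
      Measurable (fun q : ℝ × (Fin d → ℝ) => u q.1 q.2) →
      (∀ ω, IntegrableOn (fun s => g s (Y s ω) (u s (Y s ω)) k *
          Real.exp (∫ r in Icc t s, c r (Y r ω) k)) (Icc t T)) ∧
      Integrable (fun ω => h (Y T ω) k * Real.exp (∫ s in Icc t T, c s (Y s ω) k)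
        + ∫ s in Icc t T, g s (Y s ω) (u s (Y s ω)) k *
            Real.exp (∫ r in Icc t s, c r (Y r ω) k)) P := by
    intro u hum
    have hGm : Measurable (fun p : ℝ × Ω =>
        g p.1 (Y p.1 p.2) (u p.1 (Y p.1 p.2)) k *
          Real.exp (∫ r in Icc t p.1, c r (Y r p.2) k)) := by
      apply Measurable.mul
      · have hh : Measurable fun p : ℝ × Ω => g p.1 (Y p.1 p.2) (u p.1 (Y p.1 p.2)) k :=
          (measurable_pi_apply k).comp (hgmeas.comp (measurable_fst.prodMk
            (hYm.prodMk (hum.comp (measurable_fst.prodMk hYm)))))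
        exact hh
      · have hh := Real.measurable_exp.comp hEm
        exact hh
    have hGb : ∀ ω, ∀ s ∈ Icc t T,
        ‖g s (Y s ω) (u s (Y s ω)) k *
          Real.exp (∫ r in Icc t s, c r (Y r ω) k)‖ ≤ Cg * Real.exp (K * T) := by
      intro ω s hs
      have hs0 : s ∈ Icc (0 : ℝ) T := ⟨le_trans ht0 hs.1, hs.2⟩
      rw [Real.norm_eq_abs, abs_mul, Real.abs_exp]
      have h1 : |g s (Y s ω) (u s (Y s ω)) k| ≤ Cg := by
        calc |g s (Y s ω) (u s (Y s ω)) k|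
            ≤ ‖g s (Y s ω) (u s (Y s ω))‖ := by
              rw [← Real.norm_eq_abs]; exact norm_le_pi_norm _ k
          _ ≤ Cg := hCg s hs0 _ (hYD s hs ω) _
      exact mul_le_mul h1 (hEexp s hs ω) (Real.exp_nonneg _) hCg0
    have hGint : ∀ ω, IntegrableOn (fun s => g s (Y s ω) (u s (Y s ω)) k *
        Real.exp (∫ r in Icc t s, c r (Y r ω) k)) (Icc t T) := by
      intro ω
      have hsl := hGm.comp (measurable_prodMk_right (y := ω))
      have hsl2 : Measurable fun s => g s (Y s ω) (u s (Y s ω)) k *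
          Real.exp (∫ r in Icc t s, c r (Y r ω) k) := hsl
      refine Integrable.mono' (g := fun _ => Cg * Real.exp (K * T))
        (integrableOn_const (C := Cg * Real.exp (K * T)) ?_)
        hsl2.aestronglyMeasurable ?_
      · rw [Real.volume_Icc]; exact ENNReal.ofReal_ne_top
      · exact (ae_restrict_iff' measurableSet_Icc).2 (ae_of_all _ fun s hs => hGb ω s hs)
    refine ⟨hGint, ?_⟩
    have hAm : Measurable (fun ω =>
        h (Y T ω) k * Real.exp (∫ s in Icc t T, c s (Y s ω) k)
      + ∫ s in Icc t T, g s (Y s ω) (u s (Y s ω)) k *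
          Real.exp (∫ r in Icc t s, c r (Y r ω) k)) := by
      apply Measurable.add
      · apply Measurable.mul
        · have hh : Measurable fun ω : Ω => h (Y T ω) k :=
            (measurable_pi_apply k).comp (hhmeas.comp (hYm.comp
              (measurable_prodMk_left (x := T))))
          exact hh
        · have hh := Real.measurable_exp.comp (hEm.comp
            (measurable_prodMk_left (x := T)))
          exact hh
      · exact fk_meas_int t T (fun s ω => g s (Y s ω) (u s (Y s ω)) k *
            Real.exp (∫ r in Icc t s, c r (Y r ω) k)) hGm
    refine Integrable.mono' (integrable_const (Ch * Real.exp (K * T) +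
      Cg * Real.exp (K * T) * T)) hAm.aestronglyMeasurable (ae_of_all _ fun ω => ?_)
    rw [Real.norm_eq_abs]
    have hTmem : T ∈ Icc t T := ⟨htT, le_refl T⟩
    have h1 : |h (Y T ω) k * Real.exp (∫ s in Icc t T, c s (Y s ω) k)| ≤
        Ch * Real.exp (K * T) := by
      rw [abs_mul, Real.abs_exp]
      have h2 : |h (Y T ω) k| ≤ Ch := by
        rw [← Real.norm_eq_abs]
        exact le_trans (norm_le_pi_norm _ k) (hCh _ (hYD T hTmem ω))
      exact mul_le_mul h2 (hEexp T hTmem ω) (Real.exp_nonneg _) hCh0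
    have h3 : |∫ s in Icc t T, g s (Y s ω) (u s (Y s ω)) k *
        Real.exp (∫ r in Icc t s, c r (Y r ω) k)| ≤ Cg * Real.exp (K * T) * T := by
      have hsl := hGm.comp (measurable_prodMk_right (y := ω))
      have hsl2 : Measurable fun s => g s (Y s ω) (u s (Y s ω)) k *
          Real.exp (∫ r in Icc t s, c r (Y r ω) k) := hsl
      have h4 := norm_setIntegral_le_of_norm_le_const (μ := volume) (s := Icc t T)
        (by rw [Real.volume_Icc]; exact ENNReal.ofReal_lt_top) (hGb ω)
      rw [Real.norm_eq_abs] at h4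
      refine le_trans h4 ?_
      rw [measureReal_def, Real.volume_Icc, ENNReal.toReal_ofReal (by linarith : (0:ℝ) ≤ T - t)]
      apply mul_le_mul_of_nonneg_left (by linarith)
      exact mul_nonneg hCg0 (Real.exp_nonneg _)
    exact le_trans (abs_add_le _ _) (add_le_add h1 h3)
  obtain ⟨hGvint, hAvint⟩ := pack v hvm
  obtain ⟨hGwint, hAwint⟩ := pack w hwm
  -- the difference as a single integral
  have hdiff : (∫ ω, (h (Y T ω) k * Real.exp (∫ s in Icc t T, c s (Y s ω) k)
          + ∫ s in Icc t T, g s (Y s ω) (v s (Y s ω)) k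
              * Real.exp (∫ u in Icc t s, c u (Y u ω) k)) ∂P)
      - (∫ ω, (h (Y T ω) k * Real.exp (∫ s in Icc t T, c s (Y s ω) k)
          + ∫ s in Icc t T, g s (Y s ω) (w s (Y s ω)) k
              * Real.exp (∫ u in Icc t s, c u (Y u ω) k)) ∂P) =
      ∫ ω, (∫ s in Icc t T,
        (g s (Y s ω) (v s (Y s ω)) k * Real.exp (∫ r in Icc t s, c r (Y r ω) k)
          - g s (Y s ω) (w s (Y s ω)) k *
            Real.exp (∫ r in Icc t s, c r (Y r ω) k))) ∂P := by
    rw [← integral_sub hAvint hAwint]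
    congr 1
    funext ω
    rw [integral_sub (hGvint ω) (hGwint ω)]
    ring
  -- pointwise bound on the inner integrand
  have hGdiffb : ∀ ω, ∀ s ∈ Icc t T,
      ‖g s (Y s ω) (v s (Y s ω)) k * Real.exp (∫ r in Icc t s, c r (Y r ω) k)
        - g s (Y s ω) (w s (Y s ω)) k * Real.exp (∫ r in Icc t s, c r (Y r ω) k)‖ ≤
        L * M * Real.exp (K * T) * Real.exp (β * (T - s)) := by
    intro ω s hs
    have hs0 : s ∈ Icc (0 : ℝ) T := ⟨le_trans ht0 hs.1, hs.2⟩
    have hYmem := hYD s hs ω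
    rw [Real.norm_eq_abs, show
        g s (Y s ω) (v s (Y s ω)) k * Real.exp (∫ r in Icc t s, c r (Y r ω) k)
        - g s (Y s ω) (w s (Y s ω)) k * Real.exp (∫ r in Icc t s, c r (Y r ω) k)
        = (g s (Y s ω) (v s (Y s ω)) k - g s (Y s ω) (w s (Y s ω)) k) *
          Real.exp (∫ r in Icc t s, c r (Y r ω) k) from by ring,
      abs_mul, Real.abs_exp]
    have e2 : |g s (Y s ω) (v s (Y s ω)) k - g s (Y s ω) (w s (Y s ω)) k| ≤
        L * (Real.exp (β * (T - s)) * M) := by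
      calc |g s (Y s ω) (v s (Y s ω)) k - g s (Y s ω) (w s (Y s ω)) k|
          = ‖(g s (Y s ω) (v s (Y s ω)) - g s (Y s ω) (w s (Y s ω))) k‖ := by
            rw [Pi.sub_apply, Real.norm_eq_abs]
        _ ≤ ‖g s (Y s ω) (v s (Y s ω)) - g s (Y s ω) (w s (Y s ω))‖ :=
            norm_le_pi_norm _ k
        _ ≤ L * ‖v s (Y s ω) - w s (Y s ω)‖ := hgLip s hs0 _ hYmem _ _
        _ ≤ L * (Real.exp (β * (T - s)) * M) :=
            mul_le_mul_of_nonneg_left (hMpt s hs0 _ hYmem) hL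
    calc |g s (Y s ω) (v s (Y s ω)) k - g s (Y s ω) (w s (Y s ω)) k| *
          Real.exp (∫ r in Icc t s, c r (Y r ω) k)
        ≤ (L * (Real.exp (β * (T - s)) * M)) * Real.exp (K * T) := by
          apply mul_le_mul e2 (hEexp s hs ω) (Real.exp_nonneg _)
          exact mul_nonneg hL (mul_nonneg (Real.exp_nonneg _) hM0)
      _ = L * M * Real.exp (K * T) * Real.exp (β * (T - s)) := by ring
  -- the elementary integral
  have hIval : (∫ s in Icc t T, Real.exp (β * (T - s))) =
      (Real.exp (β * (T - t)) - 1) / β := by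
    rw [MeasureTheory.integral_Icc_eq_integral_Ioc, ← intervalIntegral.integral_of_le htT]
    have h2 : (∫ s in t..T, Real.exp (β * (T - s))) =
        ∫ u in T - T..T - t, Real.exp (β * u) :=
      intervalIntegral.integral_comp_sub_left (fun u => Real.exp (β * u)) T
    have h3 : (∫ u in T - T..T - t, Real.exp (β * u)) =
        β⁻¹ • ∫ r in β * (T - T)..β * (T - t), Real.exp r :=
      intervalIntegral.integral_comp_mul_left Real.exp (ne_of_gt hβ)
    rw [h2, h3, integral_exp, sub_self, mul_zero, Real.exp_zero, smul_eq_mul]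
    field_simp
  have hgint : IntegrableOn (fun s => L * M * Real.exp (K * T) * Real.exp (β * (T - s)))
      (Icc t T) := by
    apply Continuous.integrableOn_Icc
    exact continuous_const.mul (Real.continuous_exp.comp
      (continuous_const.mul (continuous_const.sub continuous_id)))
  have hbound : |(∫ ω, (h (Y T ω) k * Real.exp (∫ s in Icc t T, c s (Y s ω) k)
          + ∫ s in Icc t T, g s (Y s ω) (v s (Y s ω)) k
              * Real.exp (∫ u in Icc t s, c u (Y u ω) k)) ∂P)
      - (∫ ω, (h (Y T ω) k * Real.exp (∫ s in Icc t T, c s (Y s ω) k)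
          + ∫ s in Icc t T, g s (Y s ω) (w s (Y s ω)) k
              * Real.exp (∫ u in Icc t s, c u (Y u ω) k)) ∂P)| ≤
      L * M * Real.exp (K * T) * ((Real.exp (β * (T - t)) - 1) / β) := by
    rw [hdiff, ← Real.norm_eq_abs]
    refine le_trans (norm_integral_le_of_norm_le
      (integrable_const (L * M * Real.exp (K * T) * ((Real.exp (β * (T - t)) - 1) / β)))
      (ae_of_all _ fun ω => ?_)) ?_
    · calc ‖∫ s in Icc t T,
          (g s (Y s ω) (v s (Y s ω)) k * Real.exp (∫ r in Icc t s, c r (Y r ω) k)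
            - g s (Y s ω) (w s (Y s ω)) k * Real.exp (∫ r in Icc t s, c r (Y r ω) k))‖
          ≤ ∫ s in Icc t T, L * M * Real.exp (K * T) * Real.exp (β * (T - s)) :=
            norm_integral_le_of_norm_le hgint ((ae_restrict_iff' measurableSet_Icc).2
              (ae_of_all _ fun s hs => hGdiffb ω s hs))
        _ = L * M * Real.exp (K * T) * ∫ s in Icc t T, Real.exp (β * (T - s)) :=
            integral_const_mul _ _
        _ = L * M * Real.exp (K * T) * ((Real.exp (β * (T - t)) - 1) / β) := by
            rw [hIval]
    · rw [integral_const, measureReal_def, measure_univ, ENNReal.toReal_one, one_smul]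
  refine le_trans hbound ?_
  have hX0 : 0 ≤ L * M * Real.exp (K * T) :=
    mul_nonneg (mul_nonneg hL hM0) (Real.exp_nonneg _)
  have hE1 : (Real.exp (β * (T - t)) - 1) / β ≤ Real.exp (β * (T - t)) / β := by
    apply (div_le_div_iff_of_pos_right hβ).2
    linarith
  calc L * M * Real.exp (K * T) * ((Real.exp (β * (T - t)) - 1) / β)
      ≤ L * M * Real.exp (K * T) * (Real.exp (β * (T - t)) / β) :=
        mul_le_mul_of_nonneg_left hE1 hX0
    _ = L * M * Real.exp (K * T) / β * Real.exp (β * (T - t)) := by ring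

set_option maxHeartbeats 1000000 in
/-- The Feynman–Kac operator `F` satisfies
`‖Fv − Fw‖_β ≤ (L e^{KT} / β) ‖v − w‖_β` for every `β > 0` and all bounded
measurable `v, w`; in particular `F` is a contraction w.r.t. `‖·‖_β` whenever
`β > L e^{KT}`. -/
theorem feynman_kac_operator_contraction_estimate
    {Ω : Type*} [MeasurableSpace Ω] (P : Measure Ω) [IsProbabilityMeasure P]
    {d m : ℕ} (T : ℝ) (hT : 0 < T)
    (D : Set (Fin d → ℝ)) (hD : D.Nonempty)
    (X : ℝ → (Fin d → ℝ) → Fin m → ℝ → Ω → Fin d → ℝ)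
    (hXmeas : ∀ t ∈ Icc (0 : ℝ) T, ∀ x ∈ D, ∀ k : Fin m,
      Measurable fun q : ℝ × Ω => X t x k q.1 q.2)
    (hXD : ∀ t ∈ Icc (0 : ℝ) T, ∀ x ∈ D, ∀ k : Fin m, ∀ s ∈ Icc t T, ∀ ω,
      X t x k s ω ∈ D)
    (h : (Fin d → ℝ) → Fin m → ℝ)
    (g : ℝ → (Fin d → ℝ) → (Fin m → ℝ) → Fin m → ℝ)
    (c : ℝ → (Fin d → ℝ) → Fin m → ℝ)
    (hhmeas : Measurable h) (hhb : ∃ C, ∀ x ∈ D, ‖h x‖ ≤ C)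
    (hgmeas : Measurable fun q : ℝ × (Fin d → ℝ) × (Fin m → ℝ) => g q.1 q.2.1 q.2.2)
    (hgb : ∃ C, ∀ t ∈ Icc (0 : ℝ) T, ∀ x ∈ D, ∀ v : Fin m → ℝ, ‖g t x v‖ ≤ C)
    (hcmeas : Measurable fun q : ℝ × (Fin d → ℝ) => c q.1 q.2)
    (K : ℝ) (hK : 0 ≤ K)
    (hcK : ∀ t ∈ Icc (0 : ℝ) T, ∀ x ∈ D, ∀ k : Fin m, c t x k ≤ K)
    (L : ℝ)
    (hgLip : ∀ t ∈ Icc (0 : ℝ) T, ∀ x ∈ D, ∀ v₁ v₂ : Fin m → ℝ,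
      ‖g t x v₁ - g t x v₂‖ ≤ L * ‖v₁ - v₂‖)
    (F : (ℝ → (Fin d → ℝ) → Fin m → ℝ) → ℝ → (Fin d → ℝ) → Fin m → ℝ)
    (hF : ∀ v : ℝ → (Fin d → ℝ) → Fin m → ℝ, ∀ t ∈ Icc (0 : ℝ) T, ∀ x ∈ D, ∀ k : Fin m,
      F v t x k =
        ∫ ω, (h (X t x k T ω) k * Real.exp (∫ s in Icc t T, c s (X t x k s ω) k)
          + ∫ s in Icc t T,
              g s (X t x k s ω) (v s (X t x k s ω)) k
                * Real.exp (∫ u in Icc t s, c u (X t x k u ω) k)) ∂P) :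
    ∀ β > (0 : ℝ), ∀ v w : ℝ → (Fin d → ℝ) → Fin m → ℝ,
      Measurable (fun q : ℝ × (Fin d → ℝ) => v q.1 q.2) →
      Measurable (fun q : ℝ × (Fin d → ℝ) => w q.1 q.2) →
      (∃ C, ∀ t ∈ Icc (0 : ℝ) T, ∀ x ∈ D, ‖v t x‖ ≤ C) →
      (∃ C, ∀ t ∈ Icc (0 : ℝ) T, ∀ x ∈ D, ‖w t x‖ ≤ C) →
      betaNorm T β D (fun t x => F v t x - F w t x)
          ≤ (L * Real.exp (K * T) / β) * betaNorm T β D (fun t x => v t x - w t x)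
        ∧ (L * Real.exp (K * T) < β → L * Real.exp (K * T) / β < 1) := by
  obtain ⟨x0, hx0⟩ := hD
  obtain ⟨Ch, hCh⟩ := hhb
  obtain ⟨Cg, hCg⟩ := hgb
  have h0T : (0 : ℝ) ∈ Icc (0 : ℝ) T := ⟨le_refl _, hT.le⟩
  have hCh0 : 0 ≤ Ch := le_trans (norm_nonneg _) (hCh x0 hx0)
  have hCg0 : 0 ≤ Cg := le_trans (norm_nonneg _) (hCg 0 h0T x0 hx0 0)
  intro β hβ v w hvm hwm hvb hwb
  refine ⟨?_, fun hlt => (div_lt_one hβ).mpr hlt⟩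
  obtain ⟨Cv, hCv⟩ := hvb
  obtain ⟨Cw, hCw⟩ := hwb
  -- the degenerate case `m = 0`
  by_cases hm : m = 0
  · subst hm
    have hz : ∀ f : Fin 0 → ℝ, ‖f‖ = 0 := by
      intro f
      have hf : f = 0 := funext fun i => i.elim0
      rw [hf, norm_zero]
    have he : ∀ u : ℝ → (Fin d → ℝ) → Fin 0 → ℝ, betaNorm T β D u = 0 := by
      intro u
      have himg : (fun q : ℝ × (Fin d → ℝ) => Real.exp (-β * (T - q.1)) * ‖u q.1 q.2‖) ''
          (Icc 0 T ×ˢ D) = {0} := by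
        apply Set.eq_singleton_iff_nonempty_unique_mem.2
        constructor
        · exact (Set.Nonempty.image _ ⟨(0, x0), ⟨h0T, hx0⟩⟩)
        · rintro y ⟨q, hq, rfl⟩
          simp [hz]
      unfold betaNorm
      rw [himg, csSup_singleton]
    rw [he, he]
    simp
  -- now `m ≠ 0`
  have hmpos : 0 < m := Nat.pos_of_ne_zero hm
  haveI : Nonempty (Fin m) := ⟨⟨0, hmpos⟩⟩
  have hone : ‖(1 : Fin m → ℝ)‖ = 1 := by
    rw [show (1 : Fin m → ℝ) = fun _ : Fin m => (1 : ℝ) from rfl, pi_norm_const]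
    exact norm_one
  have hL : 0 ≤ L := by
    have h1 := hgLip 0 h0T x0 hx0 1 0
    rw [sub_zero, hone, mul_one] at h1
    exact le_trans (norm_nonneg _) h1
  have hBdd : BddAbove ((fun q : ℝ × (Fin d → ℝ) =>
      Real.exp (-β * (T - q.1)) * ‖(fun t x => v t x - w t x) q.1 q.2‖) ''
      (Icc 0 T ×ˢ D)) := by
    refine ⟨Cv + Cw, ?_⟩
    rintro b ⟨q, ⟨hq1, hq2⟩, rfl⟩
    have h1 : Real.exp (-β * (T - q.1)) ≤ 1 := by
      apply Real.exp_le_one_iff.2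
      have h2 : 0 ≤ T - q.1 := by linarith [hq1.2]
      nlinarith
    have h2 : ‖v q.1 q.2 - w q.1 q.2‖ ≤ Cv + Cw :=
      le_trans (norm_sub_le _ _) (add_le_add (hCv q.1 hq1 q.2 hq2) (hCw q.1 hq1 q.2 hq2))
    calc Real.exp (-β * (T - q.1)) * ‖(fun t x => v t x - w t x) q.1 q.2‖
        ≤ 1 * (Cv + Cw) := mul_le_mul h1 h2 (norm_nonneg _) zero_le_one
      _ = Cv + Cw := one_mul _
  have hM0 : 0 ≤ betaNorm T β D (fun t x => v t x - w t x) := by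
    have hmem : ((0 : ℝ), x0) ∈ Icc (0 : ℝ) T ×ˢ D := ⟨h0T, hx0⟩
    have h2 := Set.mem_image_of_mem (fun q : ℝ × (Fin d → ℝ) =>
      Real.exp (-β * (T - q.1)) * ‖(fun t x => v t x - w t x) q.1 q.2‖) hmem
    have h3 := le_csSup hBdd h2
    refine le_trans ?_ h3
    positivity
  have hMpt : ∀ s ∈ Icc (0 : ℝ) T, ∀ y ∈ D, ‖v s y - w s y‖ ≤
      Real.exp (β * (T - s)) * betaNorm T β D (fun t x => v t x - w t x) := by
    intro s hs y hy
    have hmem : (s, y) ∈ Icc (0 : ℝ) T ×ˢ D := ⟨hs, hy⟩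
    have hmem2 := Set.mem_image_of_mem (fun q : ℝ × (Fin d → ℝ) =>
      Real.exp (-β * (T - q.1)) * ‖(fun t x => v t x - w t x) q.1 q.2‖) hmem
    have h1 : Real.exp (-β * (T - s)) * ‖v s y - w s y‖ ≤
        betaNorm T β D (fun t x => v t x - w t x) := le_csSup hBdd hmem2
    calc ‖v s y - w s y‖
        = Real.exp (β * (T - s)) * (Real.exp (-β * (T - s)) * ‖v s y - w s y‖) := by
          rw [← mul_assoc, ← Real.exp_add, show β * (T - s) + -β * (T - s) = 0 by ring,
            Real.exp_zero, one_mul]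
      _ ≤ Real.exp (β * (T - s)) * betaNorm T β D (fun t x => v t x - w t x) :=
          mul_le_mul_of_nonneg_left h1 (Real.exp_nonneg _)
  set M := betaNorm T β D (fun t x => v t x - w t x) with hMdef
  show betaNorm T β D (fun t x => F v t x - F w t x) ≤ L * Real.exp (K * T) / β * M
  show sSup ((fun q : ℝ × (Fin d → ℝ) =>
      Real.exp (-β * (T - q.1)) * ‖(fun t x => F v t x - F w t x) q.1 q.2‖) ''
      (Icc 0 T ×ˢ D)) ≤ L * Real.exp (K * T) / β * M
  have hne : ((Icc (0 : ℝ) T ×ˢ D : Set (ℝ × (Fin d → ℝ)))).Nonempty :=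
    ⟨(0, x0), ⟨h0T, hx0⟩⟩
  apply csSup_le (hne.image _)
  rintro b ⟨⟨t, x⟩, ⟨ht, hx⟩, rfl⟩
  have ht0 : 0 ≤ t := ht.1
  have htT : t ≤ T := ht.2
  show Real.exp (-β * (T - t)) * ‖F v t x - F w t x‖ ≤ L * Real.exp (K * T) / β * M
  have hkey : ∀ k : Fin m, |F v t x k - F w t x k| ≤
      L * M * Real.exp (K * T) / β * Real.exp (β * (T - t)) := by
    intro k
    rw [hF v t ht x hx k, hF w t ht x hx k]
    exact fk_component_bound P T t ht0 htT D (X t x k) (hXmeas t ht x hx k)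
      (hXD t ht x hx k) h g c k hhmeas Ch hCh0 hCh hgmeas Cg hCg0 hCg hcmeas K hK hcK
      L hL hgLip β hβ v w hvm hwm M hM0 hMpt
  have hC0 : 0 ≤ L * M * Real.exp (K * T) / β :=
    div_nonneg (mul_nonneg (mul_nonneg hL hM0) (Real.exp_nonneg _)) hβ.le
  have hnorm : ‖F v t x - F w t x‖ ≤
      L * M * Real.exp (K * T) / β * Real.exp (β * (T - t)) := by
    refine (pi_norm_le_iff_of_nonneg (mul_nonneg hC0 (Real.exp_nonneg _))).2 fun k => ?_
    rw [Pi.sub_apply, Real.norm_eq_abs]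
    exact hkey k
  calc Real.exp (-β * (T - t)) * ‖F v t x - F w t x‖
      ≤ Real.exp (-β * (T - t)) * (L * M * Real.exp (K * T) / β * Real.exp (β * (T - t))) :=
        mul_le_mul_of_nonneg_left hnorm (Real.exp_nonneg _)
    _ = L * Real.exp (K * T) / β * M * (Real.exp (-β * (T - t)) * Real.exp (β * (T - t))) := by
        ring
    _ = L * Real.exp (K * T) / β * M := by
        rw [← Real.exp_add, show -β * (T - t) + β * (T - t) = 0 by ring, Real.exp_zero,
          mul_one]
end

section
/- Let T > 0, D ⊆ ℝ^d nonempty, m ∈ ℕ. For k, j ∈ {1,…,m}, let λ^{kj} : [0,T] × D → [0,∞) be bounded by Λ ≥ 0, and let δ^k, f^{kj} : [0,T] × D × ℝ^m → ℝ satisfy the linear growth bound |δ^k(t,x,v)| ≤ C(1 + max_i |v^i|) and |f^{kj}(t,x,v)| ≤ C(1 + max_i |v^i|) for a constant C ≥ 0 and all t, x, v, and be locally Lipschitz-continuous in v, uniformly in (t,x). Define g : [0,T] × D × ℝ^m → ℝ^m by g^k(t,x,v) := δ^k(t,x,v) + Σ_{j≠k} λ^{kj}(t,x) (v^j − v^k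 + f^{kj}(t,x,v)). Then g satisfies the monotonicity condition (2.20) with constants K1 = K2 = C(1 + (m−1)Λ), and g is locally Lipschitz-continuous in v, uniformly in (t,x). -/
open Set

/-- The interaction term (2.22),
`gᵏ(t,x,v) = δᵏ(t,x,v) + Σ_{j≠k} λᵏʲ(t,x)(vʲ − vᵏ + fᵏʲ(t,x,v))`,
with `0 ≤ λᵏʲ ≤ Λ`, `|δᵏ|, |fᵏʲ| ≤ C(1 + max_i |vⁱ|)` and `δᵏ, fᵏʲ` locally
Lipschitz in `v` uniformly in `(t,x)`, satisfies the monotonicity condition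
(2.20) with `K1 = K2 = C(1 + (m−1)Λ)` and is locally Lipschitz in `v`
uniformly in `(t,x)`. -/
theorem linear_interaction_monotone_and_locally_lipschitz
    {d m : ℕ} (T : ℝ) (hT : 0 < T)
    (D : Set (Fin d → ℝ)) (hD : D.Nonempty)
    (Λ : ℝ) (hΛ : 0 ≤ Λ) (C : ℝ) (hC : 0 ≤ C)
    (lam : Fin m → Fin m → ℝ → (Fin d → ℝ) → ℝ)
    (hlam : ∀ k j : Fin m, ∀ t ∈ Icc (0 : ℝ) T, ∀ x ∈ D,
      0 ≤ lam k j t x ∧ lam k j t x ≤ Λ)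
    (δ : Fin m → ℝ → (Fin d → ℝ) → (Fin m → ℝ) → ℝ)
    (f : Fin m → Fin m → ℝ → (Fin d → ℝ) → (Fin m → ℝ) → ℝ)
    (hδgrowth : ∀ k : Fin m, ∀ t ∈ Icc (0 : ℝ) T, ∀ x ∈ D, ∀ v : Fin m → ℝ,
      |δ k t x v| ≤ C * (1 + ⨆ i, |v i|))
    (hfgrowth : ∀ k j : Fin m, ∀ t ∈ Icc (0 : ℝ) T, ∀ x ∈ D, ∀ v : Fin m → ℝ,
      |f k j t x v| ≤ C * (1 + ⨆ i, |v i|))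
    (hδLip : ∀ k : Fin m, ∀ 𝒦 : Set (Fin m → ℝ), IsCompact 𝒦 →
      ∃ L, ∀ t ∈ Icc (0 : ℝ) T, ∀ x ∈ D, ∀ v₁ ∈ 𝒦, ∀ v₂ ∈ 𝒦,
        |δ k t x v₁ - δ k t x v₂| ≤ L * ‖v₁ - v₂‖)
    (hfLip : ∀ k j : Fin m, ∀ 𝒦 : Set (Fin m → ℝ), IsCompact 𝒦 →
      ∃ L, ∀ t ∈ Icc (0 : ℝ) T, ∀ x ∈ D, ∀ v₁ ∈ 𝒦, ∀ v₂ ∈ 𝒦,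
        |f k j t x v₁ - f k j t x v₂| ≤ L * ‖v₁ - v₂‖)
    (g : ℝ → (Fin d → ℝ) → (Fin m → ℝ) → Fin m → ℝ)
    (hg : ∀ (k : Fin m) t x (v : Fin m → ℝ),
      g t x v k = δ k t x v +
        ∑ j ∈ Finset.univ.erase k, lam k j t x * (v j - v k + f k j t x v)) :
    (∀ k : Fin m, ∀ t ∈ Icc (0 : ℝ) T, ∀ x ∈ D, ∀ v : Fin m → ℝ,
      ((∀ j, v j ≤ v k) →
        g t x v k ≤ C * (1 + ((m : ℝ) - 1) * Λ)
          + C * (1 + ((m : ℝ) - 1) * Λ) * ⨆ j, |v j|) ∧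
      ((∀ j, v k ≤ v j) →
        -(C * (1 + ((m : ℝ) - 1) * Λ)
          + C * (1 + ((m : ℝ) - 1) * Λ) * ⨆ j, |v j|) ≤ g t x v k)) ∧
    (∀ 𝒦 : Set (Fin m → ℝ), IsCompact 𝒦 →
      ∃ L, ∀ t ∈ Icc (0 : ℝ) T, ∀ x ∈ D, ∀ v₁ ∈ 𝒦, ∀ v₂ ∈ 𝒦,
        ‖g t x v₁ - g t x v₂‖ ≤ L * ‖v₁ - v₂‖) := by
  constructor
  · intro k t ht x hx v
    have hm : 0 < m := k.pos
    have hm1 : (1:ℝ) ≤ (m:ℝ) := by exact_mod_cast hm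
    set S := ⨆ i, |v i| with hS
    have hbdd : BddAbove (Set.range fun i => |v i|) := (Set.finite_range _).bddAbove
    have hSk : |v k| ≤ S := le_ciSup hbdd k
    have hS0 : 0 ≤ S := le_trans (abs_nonneg _) hSk
    have hCS : 0 ≤ C * (1 + S) := by positivity
    have hδb := hδgrowth k t ht x hx v
    have hcard : ((Finset.univ.erase k).card : ℝ) = (m:ℝ) - 1 := by
      rw [Finset.card_erase_of_mem (Finset.mem_univ k)]
      rw [Finset.card_univ, Fintype.card_fin]
      rw [Nat.cast_sub hm]
      simp
    constructor
    · intro hmax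
      have hsum : ∑ j ∈ Finset.univ.erase k, lam k j t x * (v j - v k + f k j t x v)
          ≤ ∑ _j ∈ Finset.univ.erase k, Λ * (C * (1 + S)) := by
        apply Finset.sum_le_sum
        intro j _
        obtain ⟨hl0, hlL⟩ := hlam k j t ht x hx
        have hfb := hfgrowth k j t ht x hx v
        have h1 : lam k j t x * (v j - v k) ≤ 0 :=
          mul_nonpos_of_nonneg_of_nonpos hl0 (by linarith [hmax j])
        have h2 : lam k j t x * f k j t x v ≤ Λ * (C * (1 + S)) :=
          calc lam k j t x * f k j t x v ≤ lam k j t x * |f k j t x v| :=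
                mul_le_mul_of_nonneg_left (le_abs_self _) hl0
            _ ≤ Λ * (C * (1 + S)) := mul_le_mul hlL hfb (abs_nonneg _) hΛ
        have : lam k j t x * (v j - v k + f k j t x v)
            = lam k j t x * (v j - v k) + lam k j t x * f k j t x v := by ring
        linarith
      rw [Finset.sum_const, nsmul_eq_mul, hcard] at hsum
      have hgk := hg k t x v
      have hδ' : δ k t x v ≤ C * (1 + S) := le_trans (le_abs_self _) hδb
      have : g t x v k ≤ C * (1 + S) + ((m:ℝ) - 1) * (Λ * (C * (1 + S))) := by
        rw [hgk]; linarith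
      have heq : C * (1 + S) + ((m:ℝ) - 1) * (Λ * (C * (1 + S)))
          = C * (1 + ((m : ℝ) - 1) * Λ) + C * (1 + ((m : ℝ) - 1) * Λ) * S := by ring
      linarith
    · intro hmin
      have hsum : ∑ _j ∈ Finset.univ.erase k, -(Λ * (C * (1 + S)))
          ≤ ∑ j ∈ Finset.univ.erase k, lam k j t x * (v j - v k + f k j t x v) := by
        apply Finset.sum_le_sum
        intro j _
        obtain ⟨hl0, hlL⟩ := hlam k j t ht x hx
        have hfb := hfgrowth k j t ht x hx v
        have h1 : 0 ≤ lam k j t x * (v j - v k) :=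
          mul_nonneg hl0 (by linarith [hmin j])
        have h2 : -(Λ * (C * (1 + S))) ≤ lam k j t x * f k j t x v := by
          have : lam k j t x * |f k j t x v| ≤ Λ * (C * (1 + S)) :=
            mul_le_mul hlL hfb (abs_nonneg _) hΛ
          have h3 : -(lam k j t x * f k j t x v) ≤ lam k j t x * |f k j t x v| := by
            rw [← mul_neg] at *
            exact mul_le_mul_of_nonneg_left (neg_le_abs _) hl0
          linarith
        have : lam k j t x * (v j - v k + f k j t x v)
            = lam k j t x * (v j - v k) + lam k j t x * f k j t x v := by ring
        linarith
      rw [Finset.sum_const, nsmul_eq_mul, hcard] at hsum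
      have hgk := hg k t x v
      have hδ' : -(C * (1 + S)) ≤ δ k t x v := by
        have := neg_abs_le (δ k t x v); linarith
      have heq : C * (1 + S) + ((m:ℝ) - 1) * (Λ * (C * (1 + S)))
          = C * (1 + ((m : ℝ) - 1) * Λ) + C * (1 + ((m : ℝ) - 1) * Λ) * S := by ring
      rw [hgk]
      nlinarith [hsum]
  · intro 𝒦 h𝒦
    choose Lδ hLδ using fun k => hδLip k 𝒦 h𝒦
    choose Lf hLf using fun k j => hfLip k j 𝒦 h𝒦
    set term : Fin m → ℝ := fun k =>
      max (Lδ k) 0 + ∑ j ∈ Finset.univ.erase k, Λ * (2 + max (Lf k j) 0) with hterm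
    have hterm0 : ∀ k, 0 ≤ term k := by
      intro k
      apply add_nonneg (le_max_right _ _)
      apply Finset.sum_nonneg
      intro j _
      have : (0:ℝ) ≤ 2 + max (Lf k j) 0 := by positivity
      positivity
    refine ⟨∑ k : Fin m, term k, ?_⟩
    intro t ht x hx v₁ hv₁ v₂ hv₂
    set n := ‖v₁ - v₂‖ with hn
    have hn0 : 0 ≤ n := norm_nonneg _
    have hL0 : 0 ≤ ∑ k : Fin m, term k := Finset.sum_nonneg fun k _ => hterm0 k
    have hΔ : ∀ i, |v₁ i - v₂ i| ≤ n := by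
      intro i
      have := norm_le_pi_norm (v₁ - v₂) i
      simpa [Real.norm_eq_abs] using this
    rw [pi_norm_le_iff_of_nonneg (by positivity)]
    intro k
    have hLk : term k ≤ ∑ k : Fin m, term k :=
      Finset.single_le_sum (fun i _ => hterm0 i) (Finset.mem_univ k)
    have hδd : |δ k t x v₁ - δ k t x v₂| ≤ max (Lδ k) 0 * n :=
      le_trans (hLδ k t ht x hx v₁ hv₁ v₂ hv₂)
        (mul_le_mul_of_nonneg_right (le_max_left _ _) hn0)
    have hjd : ∀ j ∈ Finset.univ.erase k,
        |lam k j t x * (v₁ j - v₁ k + f k j t x v₁)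
          - lam k j t x * (v₂ j - v₂ k + f k j t x v₂)|
        ≤ Λ * (2 + max (Lf k j) 0) * n := by
      intro j _
      obtain ⟨hl0, hlL⟩ := hlam k j t ht x hx
      have hfd : |f k j t x v₁ - f k j t x v₂| ≤ max (Lf k j) 0 * n :=
        le_trans (hLf k j t ht x hx v₁ hv₁ v₂ hv₂)
          (mul_le_mul_of_nonneg_right (le_max_left _ _) hn0)
      have hkey : lam k j t x * (v₁ j - v₁ k + f k j t x v₁)
          - lam k j t x * (v₂ j - v₂ k + f k j t x v₂)
          = lam k j t x * ((v₁ j - v₂ j) - (v₁ k - v₂ k)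
              + (f k j t x v₁ - f k j t x v₂)) := by ring
      rw [hkey, abs_mul, abs_of_nonneg hl0]
      have hin : |(v₁ j - v₂ j) - (v₁ k - v₂ k) + (f k j t x v₁ - f k j t x v₂)|
          ≤ (2 + max (Lf k j) 0) * n := by
        have h1 := hΔ j
        have h2 := hΔ k
        calc |(v₁ j - v₂ j) - (v₁ k - v₂ k) + (f k j t x v₁ - f k j t x v₂)|
            ≤ |(v₁ j - v₂ j) - (v₁ k - v₂ k)| + |f k j t x v₁ - f k j t x v₂| :=
              abs_add_le _ _
          _ ≤ (|v₁ j - v₂ j| + |v₁ k - v₂ k|) + max (Lf k j) 0 * n := by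
              have := abs_sub (v₁ j - v₂ j) (v₁ k - v₂ k)
              linarith [abs_sub_abs_le_abs_sub (v₁ j - v₂ j) (v₁ k - v₂ k),
                abs_sub (v₁ j - v₂ j) (v₁ k - v₂ k)]
          _ ≤ (2 + max (Lf k j) 0) * n := by linarith
      have hin0 : (0:ℝ) ≤ |(v₁ j - v₂ j) - (v₁ k - v₂ k) + (f k j t x v₁ - f k j t x v₂)| :=
        abs_nonneg _
      calc lam k j t x * |(v₁ j - v₂ j) - (v₁ k - v₂ k) + (f k j t x v₁ - f k j t x v₂)|
          ≤ Λ * ((2 + max (Lf k j) 0) * n) := mul_le_mul hlL hin hin0 hΛ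
        _ = Λ * (2 + max (Lf k j) 0) * n := by ring
    have hgd : g t x v₁ k - g t x v₂ k
        = (δ k t x v₁ - δ k t x v₂)
          + ∑ j ∈ Finset.univ.erase k,
            (lam k j t x * (v₁ j - v₁ k + f k j t x v₁)
              - lam k j t x * (v₂ j - v₂ k + f k j t x v₂)) := by
      rw [hg k t x v₁, hg k t x v₂, Finset.sum_sub_distrib]
      ring
    have : ‖(g t x v₁ - g t x v₂) k‖ = |g t x v₁ k - g t x v₂ k| := by
      simp [Real.norm_eq_abs]
    rw [this]
    calc |g t x v₁ k - g t x v₂ k|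
        ≤ |δ k t x v₁ - δ k t x v₂|
          + ∑ j ∈ Finset.univ.erase k,
            |lam k j t x * (v₁ j - v₁ k + f k j t x v₁)
              - lam k j t x * (v₂ j - v₂ k + f k j t x v₂)| := by
          rw [hgd]
          exact le_trans (abs_add_le _ _)
            (by gcongr; exact Finset.abs_sum_le_sum_abs _ _)
      _ ≤ max (Lδ k) 0 * n + ∑ j ∈ Finset.univ.erase k, Λ * (2 + max (Lf k j) 0) * n := by
          gcongr with j hj
          exact hjd j hj
      _ = term k * n := by rw [hterm, ← Finset.sum_mul]; ring
      _ ≤ (∑ k : Fin m, term k) * n := mul_le_mul_of_nonneg_right hLk hn0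
end

section
/- Let T > 0, D ⊆ ℝ^d nonempty, m ∈ ℕ and α > 0. For k, j ∈ {1,…,m}, let λ^{kj} : [0,T] × D → [0,∞) be bounded by Λ ≥ 0, and let δ^k, f^{kj} : [0,T] × D × ℝ^m → ℝ be bounded, with |δ^k| ≤ C_δ and |f^{kj}| ≤ C_f, and locally Lipschitz-continuous in v, uniformly in (t,x). Define g : [0,T] × D × ℝ^m → ℝ^m by g^k(t,x,v) := δ^k(t,x,v) + Σ_{j≠k} λ^{kj}(t,x) (1/α)(exp(α(v^j − v^k + f^{kj}(t,x,v))) − 1). Then g satisfies the monotonicity condition (2.20) with constants K1 = C_δ + (m−1) Λ (e^{α C_f} − 1)/α and K2 = 0, and g is locally Lipschitz-continuous in v, uniformly in (t,x). -/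
open Set

lemma exp_lip_aux {a b C : ℝ} (ha : a ≤ C) (hb : b ≤ C) :
    |Real.exp a - Real.exp b| ≤ Real.exp C * |a - b| := by
  wlog h : a ≤ b generalizing a b
  · rw [abs_sub_comm, abs_sub_comm a b]; exact this hb ha (le_of_not_ge h)
  have h1 : Real.exp a ≤ Real.exp b := Real.exp_le_exp.2 h
  rw [abs_of_nonpos (by linarith), abs_of_nonpos (by linarith)]
  have h2 : a - b + 1 ≤ Real.exp (a - b) := Real.add_one_le_exp _
  have h3 : Real.exp (a - b) * Real.exp b = Real.exp a := by
    rw [← Real.exp_add]; ring_nf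
  have h4 : Real.exp b ≤ Real.exp C := Real.exp_le_exp.2 hb
  have h5 : (0:ℝ) < Real.exp b := Real.exp_pos b
  nlinarith [Real.exp_pos a]

lemma exp_neg_ge_aux (a : ℝ) : -(Real.exp a - 1) ≤ Real.exp (-a) - 1 := by
  have h1 : Real.exp a * Real.exp (-a) = 1 := by rw [← Real.exp_add]; simp
  nlinarith [Real.exp_pos a, Real.exp_pos (-a), sq_nonneg (Real.exp a - 1)]

/-- The exponential interaction term (2.23),
`gᵏ(t,x,v) = δᵏ(t,x,v) + Σ_{j≠k} λᵏʲ(t,x)·(1/α)(exp(α(vʲ − vᵏ + fᵏʲ(t,x,v))) − 1)`,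
with `0 ≤ λᵏʲ ≤ Λ`, `|δᵏ| ≤ C_δ`, `|fᵏʲ| ≤ C_f` and `δᵏ, fᵏʲ` locally Lipschitz in
`v` uniformly in `(t,x)`, satisfies the monotonicity condition (2.20) with
`K1 = C_δ + (m−1) Λ (e^{α C_f} − 1)/α` and `K2 = 0`, and is locally Lipschitz
in `v` uniformly in `(t,x)`. -/
theorem exponential_interaction_monotone_and_locally_lipschitz
    {d m : ℕ} (T : ℝ) (hT : 0 < T) (α : ℝ) (hα : 0 < α)
    (D : Set (Fin d → ℝ)) (hD : D.Nonempty)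
    (Λ : ℝ) (hΛ : 0 ≤ Λ) (Cδ Cf : ℝ)
    (lam : Fin m → Fin m → ℝ → (Fin d → ℝ) → ℝ)
    (hlam : ∀ k j : Fin m, ∀ t ∈ Icc (0 : ℝ) T, ∀ x ∈ D,
      0 ≤ lam k j t x ∧ lam k j t x ≤ Λ)
    (δ : Fin m → ℝ → (Fin d → ℝ) → (Fin m → ℝ) → ℝ)
    (f : Fin m → Fin m → ℝ → (Fin d → ℝ) → (Fin m → ℝ) → ℝ)
    (hδb : ∀ k : Fin m, ∀ t ∈ Icc (0 : ℝ) T, ∀ x ∈ D, ∀ v : Fin m → ℝ,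
      |δ k t x v| ≤ Cδ)
    (hfb : ∀ k j : Fin m, ∀ t ∈ Icc (0 : ℝ) T, ∀ x ∈ D, ∀ v : Fin m → ℝ,
      |f k j t x v| ≤ Cf)
    (hδLip : ∀ k : Fin m, ∀ 𝒦 : Set (Fin m → ℝ), IsCompact 𝒦 →
      ∃ L, ∀ t ∈ Icc (0 : ℝ) T, ∀ x ∈ D, ∀ v₁ ∈ 𝒦, ∀ v₂ ∈ 𝒦,
        |δ k t x v₁ - δ k t x v₂| ≤ L * ‖v₁ - v₂‖)
    (hfLip : ∀ k j : Fin m, ∀ 𝒦 : Set (Fin m → ℝ), IsCompact 𝒦 →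
      ∃ L, ∀ t ∈ Icc (0 : ℝ) T, ∀ x ∈ D, ∀ v₁ ∈ 𝒦, ∀ v₂ ∈ 𝒦,
        |f k j t x v₁ - f k j t x v₂| ≤ L * ‖v₁ - v₂‖)
    (g : ℝ → (Fin d → ℝ) → (Fin m → ℝ) → Fin m → ℝ)
    (hg : ∀ (k : Fin m) t x (v : Fin m → ℝ),
      g t x v k = δ k t x v +
        ∑ j ∈ Finset.univ.erase k, lam k j t x *
          ((1 / α) * (Real.exp (α * (v j - v k + f k j t x v)) - 1))) :
    (∀ k : Fin m, ∀ t ∈ Icc (0 : ℝ) T, ∀ x ∈ D, ∀ v : Fin m → ℝ,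
      ((∀ j, v j ≤ v k) →
        g t x v k ≤ Cδ + ((m : ℝ) - 1) * Λ * ((Real.exp (α * Cf) - 1) / α)) ∧
      ((∀ j, v k ≤ v j) →
        -(Cδ + ((m : ℝ) - 1) * Λ * ((Real.exp (α * Cf) - 1) / α)) ≤ g t x v k)) ∧
    (∀ 𝒦 : Set (Fin m → ℝ), IsCompact 𝒦 →
      ∃ L, ∀ t ∈ Icc (0 : ℝ) T, ∀ x ∈ D, ∀ v₁ ∈ 𝒦, ∀ v₂ ∈ 𝒦,
        ‖g t x v₁ - g t x v₂‖ ≤ L * ‖v₁ - v₂‖) := by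
  constructor
  · -- monotonicity
    intro k t ht x hx v
    have hCf : 0 ≤ Cf := le_trans (abs_nonneg _) (hfb k k t ht x hx v)
    have hCδ : 0 ≤ Cδ := le_trans (abs_nonneg _) (hδb k t ht x hx v)
    set B : ℝ := (Real.exp (α * Cf) - 1) / α with hBdef
    have hB : 0 ≤ B := by
      apply div_nonneg _ hα.le
      have : Real.exp 0 ≤ Real.exp (α * Cf) := Real.exp_le_exp.2 (by positivity)
      simpa using this
    have hcard : ((Finset.univ.erase k).card : ℝ) = (m : ℝ) - 1 := by
      rw [Finset.card_erase_of_mem (Finset.mem_univ k), Finset.card_univ, Fintype.card_fin]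
      rw [Nat.cast_sub (Nat.one_le_iff_ne_zero.2 (by rintro rfl; exact absurd k.pos (by simp)))]
      simp
    constructor
    · intro hvk
      rw [hg]
      have hδ' : δ k t x v ≤ Cδ := (abs_le.1 (hδb k t ht x hx v)).2
      have hsum : ∑ j ∈ Finset.univ.erase k, lam k j t x *
          ((1 / α) * (Real.exp (α * (v j - v k + f k j t x v)) - 1)) ≤
          ((m : ℝ) - 1) * (Λ * B) := by
        calc ∑ j ∈ Finset.univ.erase k, lam k j t x *
            ((1 / α) * (Real.exp (α * (v j - v k + f k j t x v)) - 1))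
            ≤ ∑ _j ∈ Finset.univ.erase k, Λ * B := by
              apply Finset.sum_le_sum
              intro j _
              obtain ⟨hl0, hlΛ⟩ := hlam k j t ht x hx
              have hf' : f k j t x v ≤ Cf := (abs_le.1 (hfb k j t ht x hx v)).2
              have he : α * (v j - v k + f k j t x v) ≤ α * Cf := by
                apply mul_le_mul_of_nonneg_left _ hα.le
                have := hvk j; linarith
              have hstuff : (1 / α) * (Real.exp (α * (v j - v k + f k j t x v)) - 1) ≤ B := by
                rw [hBdef]
                have h := Real.exp_le_exp.2 he
                have h2 : (1/α) * (Real.exp (α * (v j - v k + f k j t x v)) - 1) ≤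
                    (1/α) * (Real.exp (α * Cf) - 1) :=
                  mul_le_mul_of_nonneg_left (by linarith) (by positivity)
                have h3 : (1/α) * (Real.exp (α * Cf) - 1) = (Real.exp (α * Cf) - 1) / α := by ring
                linarith
              calc lam k j t x * ((1 / α) * (Real.exp (α * (v j - v k + f k j t x v)) - 1))
                  ≤ lam k j t x * B := mul_le_mul_of_nonneg_left hstuff hl0
                _ ≤ Λ * B := mul_le_mul_of_nonneg_right hlΛ hB
          _ = ((m : ℝ) - 1) * (Λ * B) := by
              rw [Finset.sum_const, nsmul_eq_mul, hcard]
      have : Cδ + ((m:ℝ)-1) * Λ * B = Cδ + ((m:ℝ)-1) * (Λ * B) := by ring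
      linarith
    · intro hvk
      rw [hg]
      have hδ' : -Cδ ≤ δ k t x v := (abs_le.1 (hδb k t ht x hx v)).1
      have hsum : -(((m : ℝ) - 1) * (Λ * B)) ≤ ∑ j ∈ Finset.univ.erase k, lam k j t x *
          ((1 / α) * (Real.exp (α * (v j - v k + f k j t x v)) - 1)) := by
        calc -(((m : ℝ) - 1) * (Λ * B))
            = ∑ _j ∈ Finset.univ.erase k, -(Λ * B) := by
              rw [Finset.sum_const, nsmul_eq_mul, hcard]; ring
          _ ≤ ∑ j ∈ Finset.univ.erase k, lam k j t x *
              ((1 / α) * (Real.exp (α * (v j - v k + f k j t x v)) - 1)) := by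
              apply Finset.sum_le_sum
              intro j _
              obtain ⟨hl0, hlΛ⟩ := hlam k j t ht x hx
              have hf' : -Cf ≤ f k j t x v := (abs_le.1 (hfb k j t ht x hx v)).1
              have he : -(α * Cf) ≤ α * (v j - v k + f k j t x v) := by
                rw [← mul_neg]
                apply mul_le_mul_of_nonneg_left _ hα.le
                have := hvk j; linarith
              have hstuff : -B ≤ (1 / α) * (Real.exp (α * (v j - v k + f k j t x v)) - 1) := by
                rw [hBdef]
                have h1 := Real.exp_le_exp.2 he
                have h2 := exp_neg_ge_aux (α * Cf)
                have h4 : (1/α) * (-(Real.exp (α * Cf) - 1)) ≤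
                    (1/α) * (Real.exp (α * (v j - v k + f k j t x v)) - 1) :=
                  mul_le_mul_of_nonneg_left (by linarith) (by positivity)
                have h3 : (1/α) * (-(Real.exp (α * Cf) - 1)) = -((Real.exp (α * Cf) - 1) / α) := by ring
                linarith
              calc -(Λ * B) = Λ * (-B) := by ring
                _ ≤ lam k j t x * (-B) :=
                    mul_le_mul_of_nonpos_right hlΛ (by linarith)
                _ ≤ lam k j t x * ((1 / α) * (Real.exp (α * (v j - v k + f k j t x v)) - 1)) :=
                    mul_le_mul_of_nonneg_left hstuff hl0
      have : Cδ + ((m:ℝ)-1) * Λ * B = Cδ + ((m:ℝ)-1) * (Λ * B) := by ring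
      linarith
  · -- local Lipschitz
    intro 𝒦 h𝒦
    obtain ⟨r, hr⟩ := h𝒦.isBounded.subset_closedBall 0
    set R : ℝ := max r 0 with hRdef
    have hR0 : 0 ≤ R := le_max_right _ _
    have hR : ∀ v ∈ 𝒦, ‖v‖ ≤ R := fun v hv => le_trans
      (by simpa [Metric.mem_closedBall, dist_zero_right] using hr hv) (le_max_left _ _)
    choose Lδ hLδ using fun k => hδLip k 𝒦 h𝒦
    choose Lf hLf using fun k j => hfLip k j 𝒦 h𝒦
    set C : ℝ := α * (2 * R + Cf) with hCdef
    set A : Fin m → ℝ := fun k => |Lδ k| +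
      ∑ j ∈ Finset.univ.erase k, Λ * Real.exp C * (2 + |Lf k j|) with hAdef
    have hA0 : ∀ k, 0 ≤ A k := by
      intro k
      apply add_nonneg (abs_nonneg _)
      apply Finset.sum_nonneg
      intro j _
      have := Real.exp_pos C
      positivity
    refine ⟨∑ k : Fin m, A k, fun t ht x hx v₁ hv₁ v₂ hv₂ => ?_⟩
    have hL0 : 0 ≤ ∑ k : Fin m, A k := Finset.sum_nonneg fun k _ => hA0 k
    rw [pi_norm_le_iff_of_nonneg (mul_nonneg hL0 (norm_nonneg _))]
    intro k
    rw [Pi.sub_apply, Real.norm_eq_abs, hg, hg]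
    have hcomp : ∀ (j : Fin m), |v₁ j - v₂ j| ≤ ‖v₁ - v₂‖ := by
      intro j
      have := norm_le_pi_norm (v₁ - v₂) j
      simpa [Real.norm_eq_abs] using this
    have hcompR : ∀ (v : Fin m → ℝ), v ∈ 𝒦 → ∀ j, |v j| ≤ R := by
      intro v hv j
      have := norm_le_pi_norm v j
      simp only [Real.norm_eq_abs] at this
      exact this.trans (hR v hv)
    have hδd : |δ k t x v₁ - δ k t x v₂| ≤ |Lδ k| * ‖v₁ - v₂‖ :=
      (hLδ k t ht x hx v₁ hv₁ v₂ hv₂).trans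
        (mul_le_mul_of_nonneg_right (le_abs_self _) (norm_nonneg _))
    have hterm : ∀ j ∈ Finset.univ.erase k,
        |lam k j t x * ((1 / α) * (Real.exp (α * (v₁ j - v₁ k + f k j t x v₁)) - 1)) -
         lam k j t x * ((1 / α) * (Real.exp (α * (v₂ j - v₂ k + f k j t x v₂)) - 1))| ≤
        Λ * Real.exp C * (2 + |Lf k j|) * ‖v₁ - v₂‖ := by
      intro j _
      obtain ⟨hl0, hlΛ⟩ := hlam k j t ht x hx
      set a₁ : ℝ := α * (v₁ j - v₁ k + f k j t x v₁) with ha₁def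
      set a₂ : ℝ := α * (v₂ j - v₂ k + f k j t x v₂) with ha₂def
      have haC : ∀ (v : Fin m → ℝ), v ∈ 𝒦 → α * (v j - v k + f k j t x v) ≤ C := by
        intro v hv
        rw [hCdef]
        apply mul_le_mul_of_nonneg_left _ hα.le
        have h1 := hcompR v hv j
        have h2 := hcompR v hv k
        have h3 := (abs_le.1 (hfb k j t ht x hx v)).2
        linarith [le_abs_self (v j), neg_abs_le (v k)]
      have hfd : |f k j t x v₁ - f k j t x v₂| ≤ |Lf k j| * ‖v₁ - v₂‖ :=
        (hLf k j t ht x hx v₁ hv₁ v₂ hv₂).trans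
          (mul_le_mul_of_nonneg_right (le_abs_self _) (norm_nonneg _))
      have hDiff : |a₁ - a₂| ≤ α * ((2 + |Lf k j|) * ‖v₁ - v₂‖) := by
        have heq : a₁ - a₂ = α * ((v₁ j - v₂ j) - (v₁ k - v₂ k) + (f k j t x v₁ - f k j t x v₂)) := by
          rw [ha₁def, ha₂def]; ring
        rw [heq, abs_mul, abs_of_pos hα]
        apply mul_le_mul_of_nonneg_left _ hα.le
        have h1 := hcomp j
        have h2 := hcomp k
        rw [abs_le]
        constructor
        · have := neg_abs_le ((v₁ j - v₂ j) - (v₁ k - v₂ k) + (f k j t x v₁ - f k j t x v₂))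
          nlinarith [neg_abs_le (v₁ j - v₂ j), neg_abs_le (v₁ k - v₂ k),
            neg_abs_le (f k j t x v₁ - f k j t x v₂), le_abs_self (v₁ k - v₂ k)]
        · nlinarith [le_abs_self (v₁ j - v₂ j), neg_abs_le (v₁ k - v₂ k),
            le_abs_self (f k j t x v₁ - f k j t x v₂), le_abs_self (v₁ k - v₂ k)]
      have hexp : |Real.exp a₁ - Real.exp a₂| ≤ Real.exp C * |a₁ - a₂| :=
        exp_lip_aux (haC v₁ hv₁) (haC v₂ hv₂)
      have e1 : lam k j t x * ((1 / α) * (Real.exp a₁ - 1)) -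
          lam k j t x * ((1 / α) * (Real.exp a₂ - 1)) =
          lam k j t x * ((1 / α) * (Real.exp a₁ - Real.exp a₂)) := by ring
      rw [e1, abs_mul, abs_mul, abs_of_nonneg hl0, abs_of_nonneg (by positivity : (0:ℝ) ≤ 1/α)]
      have e2 : |Real.exp a₁ - Real.exp a₂| ≤ Real.exp C * (α * ((2 + |Lf k j|) * ‖v₁ - v₂‖)) :=
        hexp.trans (mul_le_mul_of_nonneg_left hDiff (Real.exp_pos C).le)
      calc lam k j t x * ((1 / α) * |Real.exp a₁ - Real.exp a₂|)
          ≤ Λ * ((1 / α) * (Real.exp C * (α * ((2 + |Lf k j|) * ‖v₁ - v₂‖)))) := by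
            apply mul_le_mul hlΛ (mul_le_mul_of_nonneg_left e2 (by positivity)) _ hΛ
            positivity
        _ = Λ * Real.exp C * (2 + |Lf k j|) * ‖v₁ - v₂‖ := by
            field_simp
    have hsumd : |(∑ j ∈ Finset.univ.erase k, lam k j t x *
          ((1 / α) * (Real.exp (α * (v₁ j - v₁ k + f k j t x v₁)) - 1))) -
        (∑ j ∈ Finset.univ.erase k, lam k j t x *
          ((1 / α) * (Real.exp (α * (v₂ j - v₂ k + f k j t x v₂)) - 1)))| ≤
        (∑ j ∈ Finset.univ.erase k, Λ * Real.exp C * (2 + |Lf k j|)) * ‖v₁ - v₂‖ := by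
      rw [← Finset.sum_sub_distrib, Finset.sum_mul]
      exact (Finset.abs_sum_le_sum_abs _ _).trans (Finset.sum_le_sum hterm)
    have hAk : A k * ‖v₁ - v₂‖ ≤ (∑ k : Fin m, A k) * ‖v₁ - v₂‖ :=
      mul_le_mul_of_nonneg_right
        (Finset.single_le_sum (fun i _ => hA0 i) (Finset.mem_univ k)) (norm_nonneg _)
    have habs : |(δ k t x v₁ + ∑ j ∈ Finset.univ.erase k, lam k j t x *
          ((1 / α) * (Real.exp (α * (v₁ j - v₁ k + f k j t x v₁)) - 1))) -
        (δ k t x v₂ + ∑ j ∈ Finset.univ.erase k, lam k j t x *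
          ((1 / α) * (Real.exp (α * (v₂ j - v₂ k + f k j t x v₂)) - 1)))| ≤
        A k * ‖v₁ - v₂‖ := by
      rw [hAdef]
      have := abs_add_le (δ k t x v₁ - δ k t x v₂)
        ((∑ j ∈ Finset.univ.erase k, lam k j t x *
          ((1 / α) * (Real.exp (α * (v₁ j - v₁ k + f k j t x v₁)) - 1))) -
        (∑ j ∈ Finset.univ.erase k, lam k j t x *
          ((1 / α) * (Real.exp (α * (v₂ j - v₂ k + f k j t x v₂)) - 1))))
      have heq : (δ k t x v₁ + ∑ j ∈ Finset.univ.erase k, lam k j t x *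
          ((1 / α) * (Real.exp (α * (v₁ j - v₁ k + f k j t x v₁)) - 1))) -
        (δ k t x v₂ + ∑ j ∈ Finset.univ.erase k, lam k j t x *
          ((1 / α) * (Real.exp (α * (v₂ j - v₂ k + f k j t x v₂)) - 1))) =
        (δ k t x v₁ - δ k t x v₂) +
        ((∑ j ∈ Finset.univ.erase k, lam k j t x *
          ((1 / α) * (Real.exp (α * (v₁ j - v₁ k + f k j t x v₁)) - 1))) -
        (∑ j ∈ Finset.univ.erase k, lam k j t x *
          ((1 / α) * (Real.exp (α * (v₂ j - v₂ k + f k j t x v₂)) - 1)))) := by ring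
      rw [heq, add_mul]
      exact le_trans this (add_le_add hδd hsumd)
    exact habs.trans hAk
end

section
/- Let T > 0, let (Ω, 𝓕, (𝓕_t)_{t ∈ [0,T]}, Q) be a filtered probability space, let H be a bounded 𝓕_T-measurable random variable, and let g : [0,T] × Ω × ℝ → ℝ be jointly measurable with |g(u,ω,y)| ≤ C(1 + |y|) for a constant C ≥ 0 and all u, ω, y, and locally Lipschitz-continuous in the last argument, uniformly in (u,ω): for every R > 0 there exists L = L(R) < ∞ such that |g(u,ω,y1) − g(u,ω,y2)| ≤ L |y1 − y2| for all (u,ω) and all y1, y2 ∈ [−R, R]. Suppose V^1, V^2 : [0,T] × Ω → ℝ are jointly measurable, uniformly bounded processes such that for each i = 1, 2 and every t ∈ [0,T], V^i_t = E_Q[ H + ∫_t^T g(u, ·, V^i_u) du | 𝓕_t ] Q-almost surely. Then for every t ∈ [0,T], V^1_t = V^2_t Q-almost surely. -/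
open MeasureTheory Set

/-- (Abstract core of Lemma 4.3.) On a filtered probability
space, there is at most one uniformly bounded jointly measurable process `V`
satisfying the recursive conditional-expectation equation
`V_t = E_Q[ H + ∫_t^T g(u,·,V_u) du | 𝓕_t ]` for all `t ∈ [0,T]`, when `H` is
bounded `𝓕_T`-measurable and `g` has linear growth and is locally Lipschitz in
its last argument, uniformly in `(u,ω)`. -/
theorem recursive_valuation_uniqueness
    {Ω : Type*} {m0 : MeasurableSpace Ω} (Q : Measure Ω) [IsProbabilityMeasure Q]
    (T : ℝ) (hT : 0 < T)
    (𝓕 : Filtration ℝ m0)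
    (H : Ω → ℝ) (hHmeas : Measurable[𝓕 T] H)
    (hHb : ∃ C, ∀ ω, |H ω| ≤ C)
    (g : ℝ → Ω → ℝ → ℝ)
    (hgmeas : Measurable fun p : ℝ × Ω × ℝ => g p.1 p.2.1 p.2.2)
    (C : ℝ) (hC : 0 ≤ C)
    (hgrowth : ∀ u ω y, |g u ω y| ≤ C * (1 + |y|))
    (hgLip : ∀ R > (0 : ℝ), ∃ L, ∀ (u : ℝ) (ω : Ω),
      ∀ y₁ ∈ Icc (-R) R, ∀ y₂ ∈ Icc (-R) R,
        |g u ω y₁ - g u ω y₂| ≤ L * |y₁ - y₂|)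
    (V₁ V₂ : ℝ → Ω → ℝ)
    (hV₁meas : Measurable fun p : ℝ × Ω => V₁ p.1 p.2)
    (hV₂meas : Measurable fun p : ℝ × Ω => V₂ p.1 p.2)
    (hVb : ∃ B, ∀ t ω, |V₁ t ω| ≤ B ∧ |V₂ t ω| ≤ B)
    (hV₁ : ∀ t ∈ Icc (0 : ℝ) T,
      V₁ t =ᵐ[Q] Q[fun ω => H ω + ∫ u in Icc t T, g u ω (V₁ u ω)|𝓕 t])
    (hV₂ : ∀ t ∈ Icc (0 : ℝ) T,
      V₂ t =ᵐ[Q] Q[fun ω => H ω + ∫ u in Icc t T, g u ω (V₂ u ω)|𝓕 t]) :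
    ∀ t ∈ Icc (0 : ℝ) T, V₁ t =ᵐ[Q] V₂ t := by
  classical
  obtain ⟨CH, hCH⟩ := hHb
  obtain ⟨B₀, hB₀⟩ := hVb
  set B : ℝ := max B₀ 1 with hBdef
  have hB1 : (1 : ℝ) ≤ B := le_max_right _ _
  have hBpos : (0 : ℝ) < B := lt_of_lt_of_le one_pos hB1
  have hB : ∀ t ω, |V₁ t ω| ≤ B ∧ |V₂ t ω| ≤ B := fun t ω =>
    ⟨(hB₀ t ω).1.trans (le_max_left _ _), (hB₀ t ω).2.trans (le_max_left _ _)⟩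
  obtain ⟨L₀, hL₀⟩ := hgLip B hBpos
  set L : ℝ := max L₀ 0 with hLdef
  have hL0 : (0 : ℝ) ≤ L := le_max_right _ _
  -- Lipschitz bound along the processes
  have hLip : ∀ u ω, |g u ω (V₁ u ω) - g u ω (V₂ u ω)| ≤ L * |V₁ u ω - V₂ u ω| := by
    intro u ω
    have h1 := abs_le.mp (hB u ω).1
    have h2 := abs_le.mp (hB u ω).2
    calc |g u ω (V₁ u ω) - g u ω (V₂ u ω)| ≤ L₀ * |V₁ u ω - V₂ u ω| :=
          hL₀ u ω _ ⟨h1.1, h1.2⟩ _ ⟨h2.1, h2.2⟩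
      _ ≤ L * |V₁ u ω - V₂ u ω| :=
          mul_le_mul_of_nonneg_right (le_max_left _ _) (abs_nonneg _)
  -- the absolute difference process
  set D : ℝ → Ω → ℝ := fun u ω => |V₁ u ω - V₂ u ω| with hDdef
  have hDmeas : Measurable fun p : ℝ × Ω => D p.1 p.2 := (hV₁meas.sub hV₂meas).abs
  have hDsm : StronglyMeasurable fun p : ℝ × Ω => D p.1 p.2 := hDmeas.stronglyMeasurable
  have hDnonneg : ∀ u ω, 0 ≤ D u ω := fun u ω => abs_nonneg _
  have hDle : ∀ u ω, D u ω ≤ 2 * B := by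
    intro u ω
    have h1 := (hB u ω).1
    have h2 := (hB u ω).2
    calc D u ω ≤ |V₁ u ω| + |V₂ u ω| := abs_sub _ _
      _ ≤ 2 * B := by linarith
  have hDint : ∀ t, Integrable (fun ω => D t ω) Q := by
    intro t
    refine (integrable_const (2 * B)).mono'
      ((hDmeas.comp (measurable_prodMk_left)).aestronglyMeasurable)
      (Filter.Eventually.of_forall fun ω => ?_)
    rw [Real.norm_eq_abs, abs_of_nonneg (hDnonneg t ω)]
    exact hDle t ω
  -- the expected difference
  set h : ℝ → ℝ := fun t => ∫ ω, D t ω ∂Q with hhdef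
  have hhsm : StronglyMeasurable h := hDsm.integral_prod_right'
  have hhnonneg : ∀ t, 0 ≤ h t := fun t =>
    integral_nonneg fun ω => hDnonneg t ω
  have hhle : ∀ t, h t ≤ 2 * B := by
    intro t
    calc h t ≤ ∫ _ω, 2 * B ∂Q := integral_mono (hDint t) (integrable_const _) (hDle t)
      _ = 2 * B := by simp
  -- the integrand processes
  have hG₁meas : Measurable fun p : ℝ × Ω => g p.1 p.2 (V₁ p.1 p.2) :=
    hgmeas.comp (measurable_fst.prodMk (measurable_snd.prodMk hV₁meas))
  have hG₂meas : Measurable fun p : ℝ × Ω => g p.1 p.2 (V₂ p.1 p.2) :=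
    hgmeas.comp (measurable_fst.prodMk (measurable_snd.prodMk hV₂meas))
  have hGbd : ∀ (u : ℝ) (ω : Ω), |g u ω (V₁ u ω)| ≤ C * (1 + B) ∧
      |g u ω (V₂ u ω)| ≤ C * (1 + B) := by
    intro u ω
    constructor
    · exact (hgrowth u ω _).trans (by nlinarith [(hB u ω).1, abs_nonneg (V₁ u ω)])
    · exact (hgrowth u ω _).trans (by nlinarith [(hB u ω).2, abs_nonneg (V₂ u ω)])
  -- sections in `u` are integrable on `Icc t T`
  have hsecInt : ∀ (W : ℝ → Ω → ℝ), Measurable (fun p : ℝ × Ω => g p.1 p.2 (W p.1 p.2)) →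
      (∀ u ω, |g u ω (W u ω)| ≤ C * (1 + B)) →
      ∀ (t : ℝ) (ω : Ω), IntegrableOn (fun u => g u ω (W u ω)) (Icc t T) := by
    intro W hWm hWb t ω
    have hm : AEStronglyMeasurable (fun u => g u ω (W u ω)) (volume.restrict (Icc t T)) :=
      (hWm.comp (measurable_id.prodMk measurable_const)).aestronglyMeasurable
    refine Integrable.mono' (integrable_const (C * (1 + B))) hm
      (Filter.Eventually.of_forall fun u => ?_)
    simpa [Real.norm_eq_abs] using hWb u ω
  have hsec₁ := hsecInt V₁ hG₁meas (fun u ω => (hGbd u ω).1)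
  have hsec₂ := hsecInt V₂ hG₂meas (fun u ω => (hGbd u ω).2)
  -- the claimed one-step integral inequality
  have key : ∀ t ∈ Icc (0 : ℝ) T, h t ≤ L * ∫ u in Icc t T, h u := by
    intro t ht
    set F₁ : Ω → ℝ := fun ω => H ω + ∫ u in Icc t T, g u ω (V₁ u ω) with hF₁def
    set F₂ : Ω → ℝ := fun ω => H ω + ∫ u in Icc t T, g u ω (V₂ u ω) with hF₂def
    have hIccT : (volume (Icc t T)).toReal = T - t := by
      rw [Real.volume_Icc, ENNReal.toReal_ofReal (by linarith [ht.2])]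
    have hFint : ∀ (W : ℝ → Ω → ℝ),
        Measurable (fun p : ℝ × Ω => g p.1 p.2 (W p.1 p.2)) →
        (∀ u ω, |g u ω (W u ω)| ≤ C * (1 + B)) →
        Integrable (fun ω => H ω + ∫ u in Icc t T, g u ω (W u ω)) Q := by
      intro W hWm hWb
      have hsm : StronglyMeasurable (fun ω => ∫ u in Icc t T, g u ω (W u ω)) :=
        hWm.stronglyMeasurable.integral_prod_left'
      refine (integrable_const (CH + C * (1 + B) * (T - t))).mono'
        (((hHmeas.mono (𝓕.le T) le_rfl).stronglyMeasurable.add hsm).aestronglyMeasurable)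
        (Filter.Eventually.of_forall fun ω => ?_)
      have hb : ‖∫ u in Icc t T, g u ω (W u ω)‖ ≤ C * (1 + B) * (T - t) := by
        rw [← hIccT]
        exact norm_setIntegral_le_of_norm_le_const measure_Icc_lt_top
          (fun u _ => by simpa [Real.norm_eq_abs] using hWb u ω)
      calc ‖H ω + ∫ u in Icc t T, g u ω (W u ω)‖
          ≤ ‖H ω‖ + ‖∫ u in Icc t T, g u ω (W u ω)‖ := norm_add_le _ _
        _ ≤ CH + C * (1 + B) * (T - t) := by
            rw [Real.norm_eq_abs]; exact add_le_add (hCH ω) hb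
    have hF₁int : Integrable F₁ Q := hFint V₁ hG₁meas fun u ω => (hGbd u ω).1
    have hF₂int : Integrable F₂ Q := hFint V₂ hG₂meas fun u ω => (hGbd u ω).2
    -- V₁ t - V₂ t = E[F₁ - F₂ | 𝓕 t] a.e.
    have hdiff : (fun ω => D t ω) =ᵐ[Q] fun ω => |(Q[F₁ - F₂|𝓕 t]) ω| := by
      filter_upwards [hV₁ t ht, hV₂ t ht, (condExp_sub hF₁int hF₂int (m := 𝓕 t)).symm]
        with ω h1 h2 h3
      simp only [hDdef, h1, h2]
      rw [show (Q[F₁|𝓕 t]) ω - (Q[F₂|𝓕 t]) ω = (Q[F₁|𝓕 t] - Q[F₂|𝓕 t]) ω from rfl, ← h3]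
    have step1 : h t = ∫ ω, |(Q[F₁ - F₂|𝓕 t]) ω| ∂Q := integral_congr_ae hdiff
    have step2 : ∫ ω, |(Q[F₁ - F₂|𝓕 t]) ω| ∂Q ≤ ∫ ω, |F₁ ω - F₂ ω| ∂Q :=
      integral_abs_condExp_le _
    -- pointwise bound on |F₁ - F₂|
    have step3 : ∀ ω, |F₁ ω - F₂ ω| ≤ ∫ u in Icc t T, L * D u ω := by
      intro ω
      have hsub : F₁ ω - F₂ ω
          = ∫ u in Icc t T, (g u ω (V₁ u ω) - g u ω (V₂ u ω)) := by
        simp only [hF₁def, hF₂def]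
        rw [integral_sub (hsec₁ t ω) (hsec₂ t ω)]
        ring
      rw [hsub]
      have hDsecInt : IntegrableOn (fun u => L * D u ω) (Icc t T) := by
        have hm : AEStronglyMeasurable (fun u => L * D u ω) (volume.restrict (Icc t T)) :=
          ((hDmeas.comp (measurable_id.prodMk measurable_const)).const_mul L).aestronglyMeasurable
        refine Integrable.mono' (integrable_const (L * (2 * B))) hm
          (Filter.Eventually.of_forall fun u => ?_)
        rw [Real.norm_eq_abs, abs_of_nonneg (mul_nonneg hL0 (hDnonneg u ω))]
        exact mul_le_mul_of_nonneg_left (hDle u ω) hL0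
      calc |∫ u in Icc t T, (g u ω (V₁ u ω) - g u ω (V₂ u ω))|
          ≤ ∫ u in Icc t T, |g u ω (V₁ u ω) - g u ω (V₂ u ω)| := by
            simpa [Real.norm_eq_abs] using
              norm_integral_le_integral_norm (μ := volume.restrict (Icc t T))
                (fun u => g u ω (V₁ u ω) - g u ω (V₂ u ω))
        _ ≤ ∫ u in Icc t T, L * D u ω :=
            integral_mono ((hsec₁ t ω).sub (hsec₂ t ω)).abs hDsecInt
              (fun u => hLip u ω)
    -- integrability of the Fubini integrand
    have hFub : Integrable (Function.uncurry fun ω u => D u ω)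
        (Q.prod (volume.restrict (Icc t T))) := by
      refine (integrable_const (2 * B)).mono'
        ((hDsm.comp_measurable measurable_swap).aestronglyMeasurable)
        (Filter.Eventually.of_forall fun p => ?_)
      rw [Function.uncurry]
      rw [Real.norm_eq_abs, abs_of_nonneg (hDnonneg _ _)]
      exact hDle _ _
    have hswap : ∫ ω, (∫ u in Icc t T, D u ω) ∂Q = ∫ u in Icc t T, h u :=
      integral_integral_swap hFub
    -- the ω-integrals
    have houter : Integrable (fun ω => ∫ u in Icc t T, L * D u ω) Q := by
      have hsm : StronglyMeasurable (fun ω => ∫ u in Icc t T, L * D u ω) :=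
        ((hDmeas.const_mul L).stronglyMeasurable).integral_prod_left'
      refine (integrable_const (L * (2 * B) * (T - t))).mono' hsm.aestronglyMeasurable
        (Filter.Eventually.of_forall fun ω => ?_)
      rw [← hIccT]
      exact norm_setIntegral_le_of_norm_le_const measure_Icc_lt_top
        (fun u _ => by
          rw [Real.norm_eq_abs, abs_of_nonneg (mul_nonneg hL0 (hDnonneg u ω))]
          exact (mul_le_mul_of_nonneg_left (hDle u ω) hL0).trans (le_of_eq (by ring)))
    have step4 : ∫ ω, |F₁ ω - F₂ ω| ∂Q ≤ ∫ ω, (∫ u in Icc t T, L * D u ω) ∂Q :=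
      integral_mono (hF₁int.sub hF₂int).abs houter step3
    have step5 : ∫ ω, (∫ u in Icc t T, L * D u ω) ∂Q = L * ∫ u in Icc t T, h u := by
      have : ∀ ω, (∫ u in Icc t T, L * D u ω) = L * ∫ u in Icc t T, D u ω := fun ω =>
        integral_const_mul L _
      simp_rw [this]
      rw [integral_const_mul, hswap]
    calc h t = ∫ ω, |(Q[F₁ - F₂|𝓕 t]) ω| ∂Q := step1
      _ ≤ ∫ ω, |F₁ ω - F₂ ω| ∂Q := step2
      _ ≤ ∫ ω, (∫ u in Icc t T, L * D u ω) ∂Q := step4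
      _ = L * ∫ u in Icc t T, h u := step5
  -- iterate the inequality
  have hpoly : ∀ (t : ℝ) (n : ℕ), t ≤ T →
      ∫ u in Icc t T, (T - u) ^ n = (T - t) ^ (n + 1) / (n + 1) := by
    intro t n htT
    rw [integral_Icc_eq_integral_Ioc, ← intervalIntegral.integral_of_le htT,
      intervalIntegral.integral_comp_sub_left (fun x => x ^ n) T]
    simp only [sub_self]
    rw [integral_pow]
    simp
  have bound : ∀ (n : ℕ), ∀ t ∈ Icc (0 : ℝ) T,
      h t ≤ 2 * B * L ^ n * (T - t) ^ n / (n.factorial : ℝ) := by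
    intro n
    induction n with
    | zero => intro t _; simpa using hhle t
    | succ n ih =>
      intro t ht
      have hint_h : IntegrableOn h (Icc t T) := by
        refine Integrable.mono' (integrable_const (2 * B))
          hhsm.aestronglyMeasurable.restrict (Filter.Eventually.of_forall fun u => ?_)
        rw [Real.norm_eq_abs, abs_of_nonneg (hhnonneg u)]
        exact hhle u
      have hint_p : IntegrableOn
          (fun u => 2 * B * L ^ n * (T - u) ^ n / (n.factorial : ℝ)) (Icc t T) := by
        exact ((continuous_const.mul
          ((continuous_const.sub continuous_id).pow n)).div_const
          (n.factorial : ℝ)).integrableOn_Icc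
      have hmono : ∫ u in Icc t T, h u ≤
          ∫ u in Icc t T, 2 * B * L ^ n * (T - u) ^ n / (n.factorial : ℝ) := by
        refine setIntegral_mono_on hint_h hint_p measurableSet_Icc fun u hu => ?_
        exact ih u ⟨le_trans ht.1 hu.1, hu.2⟩
      have hcalc : ∫ u in Icc t T, 2 * B * L ^ n * (T - u) ^ n / (n.factorial : ℝ)
          = 2 * B * L ^ n / (n.factorial : ℝ) * ((T - t) ^ (n + 1) / (n + 1)) := by
        have : (fun u => 2 * B * L ^ n * (T - u) ^ n / (n.factorial : ℝ))
            = fun u => (2 * B * L ^ n / (n.factorial : ℝ)) * (T - u) ^ n := by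
          funext u; ring
        rw [this, integral_const_mul, hpoly t n ht.2]
      calc h t ≤ L * ∫ u in Icc t T, h u := key t ht
        _ ≤ L * ∫ u in Icc t T, 2 * B * L ^ n * (T - u) ^ n / (n.factorial : ℝ) :=
            mul_le_mul_of_nonneg_left hmono hL0
        _ = 2 * B * L ^ (n + 1) * (T - t) ^ (n + 1) / ((n + 1).factorial : ℝ) := by
            rw [hcalc, Nat.factorial_succ]
            push_cast
            have h1 : ((n.factorial : ℝ)) ≠ 0 := Nat.cast_ne_zero.mpr n.factorial_ne_zero
            have h2 : ((n : ℝ) + 1) ≠ 0 := by positivity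
            field_simp
            ring
  -- conclude `h t = 0`
  have hzero : ∀ t ∈ Icc (0 : ℝ) T, h t = 0 := by
    intro t ht
    have hle : ∀ n : ℕ, h t ≤ 2 * B * ((L * (T - t)) ^ n / (n.factorial : ℝ)) := by
      intro n
      have := bound n t ht
      calc h t ≤ 2 * B * L ^ n * (T - t) ^ n / (n.factorial : ℝ) := this
        _ = 2 * B * ((L * (T - t)) ^ n / (n.factorial : ℝ)) := by
            rw [mul_pow]; ring
    have htend : Filter.Tendsto (fun n : ℕ => 2 * B * ((L * (T - t)) ^ n / (n.factorial : ℝ)))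
        Filter.atTop (nhds 0) := by
      have := (FloorSemiring.tendsto_pow_div_factorial_atTop (K := ℝ) (L * (T - t))).const_mul
        (2 * B)
      simpa using this
    have : h t ≤ 0 := ge_of_tendsto' htend hle
    exact le_antisymm this (hhnonneg t)
  -- conclude a.e. equality
  intro t ht
  have hD0 : (fun ω => D t ω) =ᵐ[Q] 0 := by
    rw [← integral_eq_zero_iff_of_nonneg (fun ω => hDnonneg t ω) (hDint t)]
    exact hzero t ht
  filter_upwards [hD0] with ω hω
  have : |V₁ t ω - V₂ t ω| = 0 := hω
  have := abs_eq_zero.mp this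
  linarith [sub_eq_zero.mp this]
end
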